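/- Let Q̃ be a type A quiver on {1,…,n′} whose full subquiver Q on {1,…,n} is linear, let s be a GCS with ℓ = n − Σ_i s_i ≥ 1, and let w_i, s^{(i)}, m_i (i ∈ [0,ℓ]) be as in the context. Let ε > 0 satisfy (1+ε)^n < 2, and let q = (q_1,…,q_{n′}) ∈ ℝ^{n′} satisfy: q_j > 0 for all j, q_j ≤ ε·q_1 for all j ∈ [n+1,n′], and q_r ≤ ε·q_{r+1} for all r ∈ [1,n−1]. Define Q_{ℓ+1} = q and, for i = ℓ down to 1, Q_i = Q_{i+1} + (Q_{i+1})_{w_i}·m_i. Then for all 1 ≤ i < i′ ≤ ℓ+1, |(Q_{i′})_{w_i} − q_{w_i}| ≤ ((1+ε)^{ℓ+1−i′} − 1)·q_{w_i}; in particular (Q_{i+1})_{w_i} > 0 for every i ∈ [1,ℓ], so Q_i − Q_{i+1} is a positive real multiple of m_i, and (Q_i)_{w_i} = 0. -/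
import Mathlib


open scoped Classical

noncomputable section

/-- Skew-symmetry: the defining property of the matrix encoding of a quiver. -/
def IsSkew {m : ℕ} (B : Matrix (Fin m) (Fin m) ℤ) : Prop := ∀ i j, B j i = -B i j

/-- The underlying (simple) graph of the quiver. -/
def underlying {m : ℕ} (B : Matrix (Fin m) (Fin m) ℤ) : SimpleGraph (Fin m) :=
  SimpleGraph.fromRel (fun i j => B i j ≠ 0)

/-- `i → j → k → i` is an oriented 3-cycle of the quiver. -/
def IsCyc3 {m : ℕ} (B : Matrix (Fin m) (Fin m) ℤ) (i j k : Fin m) : Prop :=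
  0 < B i j ∧ 0 < B j k ∧ 0 < B k i

/-- Degree of a vertex in the underlying graph. -/
def udeg {m : ℕ} (B : Matrix (Fin m) (Fin m) ℤ) (v : Fin m) : ℕ :=
  (Finset.univ.filter fun j => (underlying B).Adj v j).card

/-- The number of triangles (3-cycles of the underlying graph) containing `v`. -/
def triCount {m : ℕ} (B : Matrix (Fin m) (Fin m) ℤ) (v : Fin m) : ℕ :=
  (Finset.univ.filter fun p : Fin m × Fin m =>
    p.1 < p.2 ∧ (underlying B).Adj v p.1 ∧ (underlying B).Adj v p.2 ∧
      (underlying B).Adj p.1 p.2).card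

/-- `B` encodes a type `A` quiver: a quiver (no loops, no 2-cycles, and at most one
arrow between two vertices — a pair of parallel arrows would be a length-2 simple
cycle of the underlying multigraph) whose underlying graph is connected, all of whose
simple cycles have length 3 and are oriented, all of whose vertices have degree ≤ 4,
every degree-4 vertex lying on two triangles and every degree-3 vertex on one. -/
def IsTypeA {m : ℕ} (B : Matrix (Fin m) (Fin m) ℤ) : Prop :=
  IsSkew B ∧ (∀ i j, (B i j).natAbs ≤ 1) ∧
  (underlying B).Connected ∧
  (∀ (v : Fin m) (w : (underlying B).Walk v v), w.IsCycle → w.length = 3) ∧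
  (∀ i j k, (underlying B).Adj i j → (underlying B).Adj j k → (underlying B).Adj k i →
    IsCyc3 B i j k ∨ IsCyc3 B i k j) ∧
  (∀ v, udeg B v ≤ 4) ∧
  (∀ v, udeg B v = 4 → triCount B v = 2) ∧
  (∀ v, udeg B v = 3 → triCount B v = 1)

/-- The full subquiver of (the quiver encoded by) `B` on the first `n` vertices is
linear: exactly one arrow between consecutive vertices `i, i+1` (in either direction)
and no other arrows among the first `n` vertices. -/
def LinearOn {n' : ℕ} (B : Matrix (Fin n') (Fin n') ℤ) (n : ℕ) (hn : n ≤ n') : Prop :=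
  (∀ (i : ℕ) (h : i + 1 < n),
      B ⟨i, by omega⟩ ⟨i + 1, by omega⟩ ≠ 0) ∧
  (∀ (i j : ℕ) (hi : i < n) (hj : j < n), j ≠ i + 1 → i ≠ j + 1 →
      B ⟨i, by omega⟩ ⟨j, by omega⟩ = 0)

/-- A GCS for the linear subquiver `Q` on the first `n` vertices: `s ∈ {0,1}^n` with
`(s_i, s_j) ≠ (1, 0)` for every arrow `i → j` of `Q`. -/
def IsGCSlin {n' n : ℕ} (hn : n ≤ n') (B : Matrix (Fin n') (Fin n') ℤ)
    (s : Fin n → Bool) : Prop :=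
  ∀ i j : Fin n, 0 < B (Fin.castLE hn i) (Fin.castLE hn j) →
    ¬ (s i = true ∧ s j = false)

/-- `deg^{1→}_{Q,s}(r)`: the number of arrows `j → r` of `Q̃` with `j ∈ [1,n]` and
`s_j = 1`. -/
def deg1to {n' n : ℕ} (hn : n ≤ n') (B : Matrix (Fin n') (Fin n') ℤ)
    (s : Fin n → Bool) (r : Fin n') : ℕ :=
  ∑ j : Fin n, if s j = true then (B (Fin.castLE hn j) r).toNat else 0

/-- `deg^{0←}_{Q,s}(r)`: the number of arrows `r → j` of `Q̃` with `j ∈ [1,n]` and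
`s_j = 0`. -/
def deg0from {n' n : ℕ} (hn : n ≤ n') (B : Matrix (Fin n') (Fin n') ℤ)
    (s : Fin n → Bool) (r : Fin n') : ℕ :=
  ∑ j : Fin n, if s j = false then (B r (Fin.castLE hn j)).toNat else 0

/-- The vector `g_Q(s) ∈ ℤ^{n'}`. -/
def gQ {n' n : ℕ} (hn : n ≤ n') (B : Matrix (Fin n') (Fin n') ℤ)
    (s : Fin n → Bool) (r : Fin n') : ℤ :=
  if (r : ℕ) < n ∨ ∃ i j : Fin n, IsCyc3 B r (Fin.castLE hn i) (Fin.castLE hn j) then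
    (deg1to hn B s r : ℤ) + (deg0from hn B s r : ℤ) - 1
  else (deg1to hn B s r : ℤ) + (deg0from hn B s r : ℤ)

/-- `w` is an adjustable position for the GCS `s`: `s_w = 0` and flipping the `w`-th
coordinate to `1` yields again a GCS. -/
def Adjustable {n' n : ℕ} (hn : n ≤ n') (B : Matrix (Fin n') (Fin n') ℤ)
    (s : Fin n → Bool) (w : Fin n) : Prop :=
  s w = false ∧ IsGCSlin hn B (Function.update s w true)

/-- The least adjustable position (0-based) of the GCS `s`. -/
def leastAdj {n' n : ℕ} (hn : n ≤ n') (B : Matrix (Fin n') (Fin n') ℤ)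
    (s : Fin n → Bool) : ℕ :=
  sInf {w : ℕ | ∃ h : w < n, Adjustable hn B s ⟨w, h⟩}

/-- Flip the least adjustable position of `s` from `0` to `1`. -/
def flipLeast {n' n : ℕ} (hn : n ≤ n') (B : Matrix (Fin n') (Fin n') ℤ)
    (s : Fin n → Bool) : Fin n → Bool :=
  if h : leastAdj hn B s < n then Function.update s ⟨leastAdj hn B s, h⟩ true else s

/-- The downward recursion `Q_{ℓ+1} = q`, `Q_i = Q_{i+1} + (Q_{i+1})_{w_i}·m_i`,
reparametrized upwards: `Rseq q wf mv ℓ t = Q_{ℓ+1-t}`. -/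
def Rseq {n' : ℕ} (q : Fin n' → ℝ) (wf : ℕ → Fin n') (mv : ℕ → Fin n' → ℝ)
    (ℓ : ℕ) : ℕ → Fin n' → ℝ
  | 0 => q
  | t + 1 => fun r =>
      Rseq q wf mv ℓ t r + Rseq q wf mv ℓ t (wf (ℓ - t)) * mv (ℓ - t) r


section Helpers

variable {n' n : ℕ} (hn : n ≤ n') (B : Matrix (Fin n') (Fin n') ℤ) (s : Fin n → Bool)

/-- Blocked upward: an arrow `a → a+1` with `s_{a+1} = 0`. -/
def BUp (a : ℕ) : Prop :=
  ∃ h : a + 1 < n, 0 < B ⟨a, by omega⟩ ⟨a + 1, by omega⟩ ∧ s ⟨a + 1, h⟩ = false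

/-- Blocked downward: an arrow `a → a-1` with `s_{a-1} = 0`. -/
def BDown (a : ℕ) : Prop :=
  ∃ h : 0 < a ∧ a < n, 0 < B ⟨a, by omega⟩ ⟨a - 1, by omega⟩ ∧ s ⟨a - 1, by omega⟩ = false

lemma skew_diag (hsk : IsSkew B) (i : Fin n') : B i i = 0 := by
  have := hsk i i; omega

lemma arrow_cases (hlin : LinearOn B n hn) (a j : Fin n)
    (hB : B (Fin.castLE hn a) (Fin.castLE hn j) ≠ 0) : (j : ℕ) = a + 1 ∨ (a : ℕ) = j + 1 := by
  by_contra hcon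
  push_neg at hcon
  exact hB (hlin.2 (a : ℕ) (j : ℕ) a.isLt j.isLt hcon.1 hcon.2)

lemma adjustable_iff (hsk : IsSkew B) (hs : IsGCSlin hn B s) (w : Fin n) :
    Adjustable hn B s w ↔
      s w = false ∧ ∀ j : Fin n, 0 < B (Fin.castLE hn w) (Fin.castLE hn j) → s j = true := by
  constructor
  · rintro ⟨h0, hg⟩
    refine ⟨h0, fun j hB => ?_⟩
    have hjw : j ≠ w := by
      rintro rfl
      have := skew_diag B hsk (Fin.castLE hn j)
      omega
    have := hg w j hB
    simp [Function.update_apply, hjw] at this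
    exact this
  · rintro ⟨h0, hall⟩
    refine ⟨h0, ?_⟩
    intro i j hB hcon
    by_cases hj' : j = w
    · subst hj'
      simp [Function.update_apply] at hcon
    · by_cases hi' : i = w
      · subst hi'
        have := hall j hB
        simp [Function.update_apply, hj', this] at hcon
      · simp [Function.update_apply, hi', hj'] at hcon
        exact hs i j hB hcon

lemma adjustable_iff' (hsk : IsSkew B) (hlin : LinearOn B n hn) (hs : IsGCSlin hn B s)
    (w : Fin n) :
    Adjustable hn B s w ↔ s w = false ∧ ¬ BUp hn B s (w : ℕ) ∧ ¬ BDown hn B s (w : ℕ) := by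
  rw [adjustable_iff hn B s hsk hs w]
  refine and_congr_right fun h0 => ?_
  constructor
  · intro hall
    constructor
    · rintro ⟨h1, hB, hs1⟩
      have := hall ⟨(w : ℕ) + 1, h1⟩ hB
      rw [this] at hs1; exact absurd hs1 (by simp)
    · rintro ⟨h1, hB, hs1⟩
      have := hall ⟨(w : ℕ) - 1, by omega⟩ hB
      rw [this] at hs1; exact absurd hs1 (by simp)
  · rintro ⟨hup, hdown⟩ j hB
    rcases arrow_cases hn B hlin w j (ne_of_gt hB) with hc | hc
    · by_contra hsj
      have hsj' : s j = false := by
        cases hhh : s j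
        · rfl
        · exact absurd hhh hsj
      refine hup ⟨by omega, ?_, ?_⟩
      · have : (⟨(w : ℕ) + 1, by omega⟩ : Fin n') = Fin.castLE hn j := by
          exact Fin.ext (by simp [hc])
        rw [this]; exact hB
      · have : (⟨(w : ℕ) + 1, by omega⟩ : Fin n) = j := Fin.ext (by simp [hc])
        rw [this]; exact hsj'
    · by_contra hsj
      have hsj' : s j = false := by
        cases hhh : s j
        · rfl
        · exact absurd hhh hsj
      refine hdown ⟨⟨by omega, w.isLt⟩, ?_, ?_⟩
      · have : (⟨(w : ℕ) - 1, by omega⟩ : Fin n') = Fin.castLE hn j := by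
          exact Fin.ext (by simp; omega)
        rw [this]; exact hB
      · have : (⟨(w : ℕ) - 1, by omega⟩ : Fin n) = j := Fin.ext (by simp; omega)
        rw [this]; exact hsj'


lemma not_BDown_succ (hsk : IsSkew B) (a : ℕ) (h1 : a + 1 < n)
    (hB : 0 < B ⟨a, by omega⟩ ⟨a + 1, by omega⟩) : ¬ BDown hn B s (a + 1) := by
  rintro ⟨h, hB', _⟩
  have := hsk (⟨a, by omega⟩ : Fin n') (⟨a + 1, by omega⟩ : Fin n')
  simp only [show (a + 1 - 1) = a from rfl] at hB'
  omega

lemma findUp (hsk : IsSkew B) (hlin : LinearOn B n hn) (hs : IsGCSlin hn B s) :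
    ∀ k a (h : a < n), n - a ≤ k → s ⟨a, h⟩ = false → ¬ BDown hn B s a →
      ∃ w, Adjustable hn B s w := by
  intro k
  induction k with
  | zero => intro a h hk _ _; omega
  | succ k ih =>
    intro a h hk hs0 hnd
    by_cases hup : BUp hn B s a
    · obtain ⟨h1, hB, hs1⟩ := hup
      exact ih (a + 1) h1 (by omega) hs1 (not_BDown_succ hn B s hsk a h1 hB)
    · exact ⟨⟨a, h⟩, (adjustable_iff' hn B s hsk hlin hs ⟨a, h⟩).mpr ⟨hs0, hup, hnd⟩⟩

lemma findDown (hsk : IsSkew B) (hlin : LinearOn B n hn) (hs : IsGCSlin hn B s) :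
    ∀ k a (h : a < n), a ≤ k → s ⟨a, h⟩ = false → ¬ BUp hn B s a →
      ∃ w, Adjustable hn B s w := by
  intro k
  induction k with
  | zero =>
    intro a h hk hs0 hnu
    refine ⟨⟨a, h⟩, (adjustable_iff' hn B s hsk hlin hs ⟨a, h⟩).mpr ⟨hs0, hnu, ?_⟩⟩
    rintro ⟨hh, _⟩
    have hv : ((⟨a, h⟩ : Fin n) : ℕ) = a := rfl
    rw [hv] at hh
    omega
  | succ k ih =>
    intro a h hk hs0 hnu
    by_cases hdown : BDown hn B s a
    · obtain ⟨hh, hB, hs1⟩ := hdown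
      refine ih (a - 1) (by omega) (by omega) hs1 ?_
      rintro ⟨h1', hB', _⟩
      have heq : (⟨a - 1 + 1, by omega⟩ : Fin n') = ⟨a, by omega⟩ := Fin.ext (by simp; omega)
      rw [heq] at hB'
      have := hsk (⟨a - 1, by omega⟩ : Fin n') (⟨a, by omega⟩ : Fin n')
      omega
    · exact ⟨⟨a, h⟩, (adjustable_iff' hn B s hsk hlin hs ⟨a, h⟩).mpr ⟨hs0, hnu, hdown⟩⟩

lemma exists_adjustable (hsk : IsSkew B) (hlin : LinearOn B n hn) (hs : IsGCSlin hn B s)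
    (a : Fin n) (ha : s a = false) : ∃ w, Adjustable hn B s w := by
  by_cases hup : BUp hn B s (a : ℕ)
  · obtain ⟨h1, hB, hs1⟩ := hup
    exact findUp hn B s hsk hlin hs n ((a : ℕ) + 1) h1 (by omega) hs1
      (not_BDown_succ hn B s hsk (a : ℕ) h1 hB)
  · exact findDown hn B s hsk hlin hs n (a : ℕ) a.isLt (by omega)
      (by rw [show (⟨(a : ℕ), a.isLt⟩ : Fin n) = a from Fin.ext rfl]; exact ha) hup

/-- Below the least adjustable position, no zero position is blocked downward. -/
lemma no_BDown (hsk : IsSkew B) (hlin : LinearOn B n hn) (hs : IsGCSlin hn B s) :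
    ∀ a, (∀ b, b ≤ a → ∀ hb : b < n, ¬ Adjustable hn B s ⟨b, hb⟩) →
      ∀ ha : a < n, s ⟨a, ha⟩ = false → ¬ BDown hn B s a := by
  intro a
  induction a with
  | zero => rintro _ _ _ ⟨hh, _⟩; omega
  | succ a ih =>
    intro hna ha hs0
    rintro ⟨hh, hB, hs1⟩
    simp only [Nat.add_sub_cancel] at hB hs1
    have hnadj := hna a (by omega) (by omega)
    rw [adjustable_iff' hn B s hsk hlin hs] at hnadj
    push_neg at hnadj
    by_cases hup : BUp hn B s a
    · obtain ⟨h1, hB', _⟩ := hup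
      have := hsk (⟨a, by omega⟩ : Fin n') (⟨a + 1, by omega⟩ : Fin n')
      omega
    · exact ih (fun b hb => hna b (by omega)) (by omega) hs1 ((hnadj hs1) hup)

lemma deg1to_eq_zero (hs : IsGCSlin hn B s) (a : Fin n) (ha : s a = false) :
    deg1to hn B s (Fin.castLE hn a) = 0 := by
  apply Finset.sum_eq_zero
  intro j _
  split
  · rename_i hj
    refine Int.toNat_eq_zero.mpr ?_
    by_contra hB
    push_neg at hB
    exact hs j a (by omega) ⟨hj, ha⟩
  · rfl

lemma sum_indicator_val (c : ℕ) :
    (∑ j : Fin n, if (j : ℕ) = c then (1 : ℕ) else 0) ≤ 1 := by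
  by_cases hc : c < n
  · have : ∀ j : Fin n, ((j : ℕ) = c) = (j = ⟨c, hc⟩) := by
      intro j; simp [Fin.ext_iff]
    simp only [this]
    rw [Finset.sum_ite_eq' Finset.univ (⟨c, hc⟩ : Fin n) (fun _ => (1 : ℕ))]
    simp
  · have : ∀ j : Fin n, ((j : ℕ) = c) = False := by
      intro j; simp; omega
    simp [this]

lemma deg0from_le_two (hA1 : ∀ i j, (B i j).natAbs ≤ 1) (hlin : LinearOn B n hn) (a : Fin n) :
    deg0from hn B s (Fin.castLE hn a) ≤ 2 := by
  have hb : ∀ j : Fin n, (if s j = false then (B (Fin.castLE hn a) (Fin.castLE hn j)).toNat else 0)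
      ≤ (if (j : ℕ) = (a : ℕ) + 1 then 1 else 0) + (if (j : ℕ) + 1 = (a : ℕ) then 1 else 0) := by
    intro j
    by_cases h1 : (j : ℕ) = (a : ℕ) + 1
    · have := hA1 (Fin.castLE hn a) (Fin.castLE hn j)
      simp [h1]
      split <;> omega
    · by_cases h2 : (j : ℕ) + 1 = (a : ℕ)
      · have := hA1 (Fin.castLE hn a) (Fin.castLE hn j)
        simp [h1, h2]
        split <;> omega
      · have : B (Fin.castLE hn a) (Fin.castLE hn j) = 0 :=
          hlin.2 (a : ℕ) (j : ℕ) a.isLt j.isLt h1 (fun hc => h2 hc.symm)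
        simp [this]
  calc deg0from hn B s (Fin.castLE hn a) ≤
      ∑ j : Fin n, ((if (j : ℕ) = (a : ℕ) + 1 then 1 else 0) +
        (if (j : ℕ) + 1 = (a : ℕ) then 1 else 0)) := Finset.sum_le_sum (fun j _ => hb j)
    _ ≤ 2 := by
        rw [Finset.sum_add_distrib]
        have h1 := sum_indicator_val (n := n) ((a : ℕ) + 1)
        have h2 : (∑ j : Fin n, if (j : ℕ) + 1 = (a : ℕ) then (1 : ℕ) else 0) ≤ 1 := by
          have : ∀ j : Fin n, ((j : ℕ) + 1 = (a : ℕ)) = ((j : ℕ) = (a : ℕ) - 1 ∧ 1 ≤ (a : ℕ)) := by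
            intro j; simp only [eq_iff_iff]; omega
          by_cases hone : 1 ≤ (a : ℕ)
          · simp only [this, hone, and_true]
            exact sum_indicator_val ((a : ℕ) - 1)
          · simp only [this, hone, and_false]
            simp
        omega


lemma gQ_castLE (a : Fin n) :
    gQ hn B s (Fin.castLE hn a) =
      (deg1to hn B s (Fin.castLE hn a) : ℤ) + (deg0from hn B s (Fin.castLE hn a) : ℤ) - 1 := by
  unfold gQ
  rw [if_pos (Or.inl (by simp))]

lemma deg0from_eq_zero_of_adjustable (hsk : IsSkew B) (hs : IsGCSlin hn B s) (w : Fin n)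
    (hadj : Adjustable hn B s w) : deg0from hn B s (Fin.castLE hn w) = 0 := by
  rw [adjustable_iff hn B s hsk hs w] at hadj
  obtain ⟨h0, hall⟩ := hadj
  apply Finset.sum_eq_zero
  intro j _
  split
  · rename_i hj
    refine Int.toNat_eq_zero.mpr ?_
    by_contra hB
    push_neg at hB
    rw [hall j hB] at hj
    exact absurd hj (by simp)
  · rfl

lemma gQ_of_adjustable (hsk : IsSkew B) (hs : IsGCSlin hn B s) (w : Fin n)
    (hadj : Adjustable hn B s w) : gQ hn B s (Fin.castLE hn w) = -1 := by
  rw [gQ_castLE, deg1to_eq_zero hn B s hs w hadj.1,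
    deg0from_eq_zero_of_adjustable hn B s hsk hs w hadj]
  simp

lemma gQ_abs_le_one (hA1 : ∀ i j, (B i j).natAbs ≤ 1) (hlin : LinearOn B n hn)
    (hs : IsGCSlin hn B s) (a : Fin n) (ha : s a = false) :
    -1 ≤ gQ hn B s (Fin.castLE hn a) ∧ gQ hn B s (Fin.castLE hn a) ≤ 1 := by
  rw [gQ_castLE, deg1to_eq_zero hn B s hs a ha]
  have := deg0from_le_two hn B s hA1 hlin a
  omega

lemma gQ_below_least (hsk : IsSkew B) (hA1 : ∀ i j, (B i j).natAbs ≤ 1)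
    (hlin : LinearOn B n hn) (hs : IsGCSlin hn B s) (a : ℕ) (ha : a < n)
    (hna : ∀ b, b ≤ a → ∀ hb : b < n, ¬ Adjustable hn B s ⟨b, hb⟩)
    (hs0 : s ⟨a, ha⟩ = false) : gQ hn B s (Fin.castLE hn ⟨a, ha⟩) = 0 := by
  have hnd : ¬ BDown hn B s a := no_BDown hn B s hsk hlin hs a hna ha hs0
  have hnadj := hna a le_rfl ha
  rw [adjustable_iff' hn B s hsk hlin hs] at hnadj
  push_neg at hnadj
  have hup : BUp hn B s a := by
    by_contra hnu
    exact hnd ((hnadj hs0) hnu)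
  -- deg0from = 1
  obtain ⟨h1, hB, hs1⟩ := hup
  have hd0 : deg0from hn B s (Fin.castLE hn ⟨a, ha⟩) = 1 := by
    unfold deg0from
    rw [Finset.sum_eq_single (⟨a + 1, h1⟩ : Fin n)]
    · rw [if_pos hs1]
      have := hA1 (Fin.castLE hn ⟨a, ha⟩) (Fin.castLE hn ⟨a + 1, h1⟩)
      have hB' : 0 < B (Fin.castLE hn ⟨a, ha⟩) (Fin.castLE hn ⟨a + 1, h1⟩) := hB
      omega
    · intro j _ hj
      split
      · rename_i hsj
        refine Int.toNat_eq_zero.mpr ?_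
        by_contra hBj
        push_neg at hBj
        rcases arrow_cases hn B hlin ⟨a, ha⟩ j (ne_of_gt hBj) with hc | hc
        · have hc' : (j : ℕ) = a + 1 := hc
          exact hj (Fin.ext hc')
        · have hc' : a = (j : ℕ) + 1 := hc
          refine hnd ⟨⟨by omega, ha⟩, ?_, ?_⟩
          · have hje : (⟨a - 1, by omega⟩ : Fin n') = Fin.castLE hn j :=
              Fin.ext (show a - 1 = (j : ℕ) by omega)
            rw [hje]
            exact hBj
          · have hje : (⟨a - 1, by omega⟩ : Fin n) = j :=
              Fin.ext (show a - 1 = (j : ℕ) by omega)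
            rw [hje]
            exact hsj
      · rfl
    · intro h; exact absurd (Finset.mem_univ _) h
  rw [gQ_castLE, deg1to_eq_zero hn B s hs ⟨a, ha⟩ hs0, hd0]
  simp

lemma card_filter_update (w : Fin n) (hw : s w = false) :
    (Finset.univ.filter fun i => Function.update s w true i = true).card
      = (Finset.univ.filter fun i => s i = true).card + 1 := by
  have heq : (Finset.univ.filter fun i => Function.update s w true i = true)
      = insert w (Finset.univ.filter fun i => s i = true) := by
    ext i
    simp only [Finset.mem_filter, Finset.mem_insert, Finset.mem_univ, true_and,
      Function.update_apply]
    by_cases hi : i = w <;> simp [hi]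
  rw [heq, Finset.card_insert_of_notMem (by simp [hw])]

lemma exists_false_coord (h : (Finset.univ.filter fun i => s i = true).card < n) :
    ∃ a, s a = false := by
  by_contra hc
  push_neg at hc
  have heq : (Finset.univ.filter fun i => s i = true) = Finset.univ := by
    apply Finset.filter_true_of_mem
    intro i _
    cases hhh : s i
    · exact absurd hhh (hc i)
    · rfl
  rw [heq, Finset.card_univ] at h
  simp at h

lemma flipLeast_true (x : Fin n) (hx : s x = true) : flipLeast hn B s x = true := by
  unfold flipLeast
  split
  · rw [Function.update_apply]
    split <;> simp [hx]
  · exact hx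

end Helpers

/-- **Theorem (the bending points of the broken line are well defined).**
With `s^{(ℓ)} = s`, `w_i` the least adjustable position of `s^{(i)}`, `s^{(i-1)}`
obtained from `s^{(i)}` by flipping `w_i`, `m_i = g_Q(s^{(i)})`, `Q_{ℓ+1} = q` and
`Q_i = Q_{i+1} + (Q_{i+1})_{w_i}·m_i`:  for all `1 ≤ i < i' ≤ ℓ+1` one has
`|(Q_{i'})_{w_i} − q_{w_i}| ≤ ((1+ε)^{ℓ+1−i'} − 1)·q_{w_i}`; in particular
`(Q_{i+1})_{w_i} > 0`, so `Q_i − Q_{i+1}` is a positive multiple of `m_i`, and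
`(Q_i)_{w_i} = 0`. -/
theorem broken_line_bending_points
    {n' n : ℕ} (hpos : 1 ≤ n) (hn : n ≤ n')
    (B : Matrix (Fin n') (Fin n') ℤ) (hA : IsTypeA B) (hlin : LinearOn B n hn)
    (s : Fin n → Bool) (hs : IsGCSlin hn B s)
    (hl : 1 ≤ n - (Finset.univ.filter fun i => s i = true).card)
    (ε : ℝ) (hε : 0 < ε) (hε2 : (1 + ε) ^ n < 2)
    (q : Fin n' → ℝ) (hq : ∀ j, 0 < q j)
    (hqtail : ∀ j : Fin n', n ≤ (j : ℕ) → q j ≤ ε * q ⟨0, by omega⟩)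
    (hqchain : ∀ (r : ℕ) (h : r + 1 < n),
      q ⟨r, by omega⟩ ≤ ε * q ⟨r + 1, by omega⟩) :
    let ℓ : ℕ := n - (Finset.univ.filter fun i => s i = true).card
    let seqS : ℕ → (Fin n → Bool) := fun t => (flipLeast hn B)^[t] s
    let wf : ℕ → Fin n' := fun i =>
      ⟨leastAdj hn B (seqS (ℓ - i)) % n', Nat.mod_lt _ (by omega)⟩
    let mv : ℕ → Fin n' → ℝ := fun i r => ((gQ hn B (seqS (ℓ - i)) r : ℤ) : ℝ)
    let Qv : ℕ → Fin n' → ℝ := fun i => Rseq q wf mv ℓ (ℓ + 1 - i)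
    (∀ i i' : ℕ, 1 ≤ i → i < i' → i' ≤ ℓ + 1 →
      |Qv i' (wf i) - q (wf i)| ≤ ((1 + ε) ^ (ℓ + 1 - i') - 1) * q (wf i)) ∧
    (∀ i : ℕ, 1 ≤ i → i ≤ ℓ → 0 < Qv (i + 1) (wf i)) ∧
    (∀ i : ℕ, 1 ≤ i → i ≤ ℓ →
      ∃ c : ℝ, 0 < c ∧ ∀ r, Qv i r - Qv (i + 1) r = c * mv i r) ∧
    (∀ i : ℕ, 1 ≤ i → i ≤ ℓ → Qv i (wf i) = 0) := by
  have hsk : IsSkew B := hA.1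
  have hA1 : ∀ i j, (B i j).natAbs ≤ 1 := hA.2.1
  intro ℓ seqS wf mv Qv
  have hℓ1 : 1 ≤ ℓ := hl
  have hℓn : ℓ ≤ n := Nat.sub_le _ _
  have hε1 : ε < 1 := by
    have h1 : (1 + ε) ≤ (1 + ε) ^ n := le_self_pow₀ (by linarith) (by omega)
    linarith
  -- monotonicity of q along the chain
  have hqmono : ∀ b : ℕ, ∀ hb : b < n, ∀ a : ℕ, ∀ hab : a ≤ b,
      q ⟨a, by omega⟩ ≤ q ⟨b, by omega⟩ := by
    intro b
    induction b with
    | zero =>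
      intro hb a ha
      have : a = 0 := by omega
      subst this
      exact le_rfl
    | succ b ihb =>
      intro hb a ha
      by_cases hab : a = b + 1
      · subst hab; exact le_rfl
      · have h2 := ihb (by omega) a (by omega)
        have h3 := hqchain b hb
        have h4 := hq (⟨b + 1, by omega⟩ : Fin n')
        nlinarith
  have hqlt : ∀ a b : ℕ, ∀ hb : b < n, ∀ hab : a < b,
      q ⟨a, by omega⟩ ≤ ε * q ⟨b, by omega⟩ := by
    intro a b hb hab
    have h1 := hqmono (b - 1) (by omega) a (by omega)
    have h2 := hqchain (b - 1) (by omega)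
    have e : (⟨b - 1 + 1, by omega⟩ : Fin n') = ⟨b, by omega⟩ := Fin.ext (by simp; omega)
    rw [e] at h2
    linarith
  -- basic facts about seqS
  have seqS_succ : ∀ t, seqS (t + 1) = flipLeast hn B (seqS t) := by
    intro t
    show (flipLeast hn B)^[t + 1] s = _
    rw [Function.iterate_succ_apply']
  have stage : ∀ t, t ≤ ℓ → IsGCSlin hn B (seqS t) ∧
      (Finset.univ.filter fun i => seqS t i = true).card + ℓ = n + t := by
    intro t
    induction t with
    | zero =>
      intro _
      refine ⟨hs, ?_⟩
      have hcle : (Finset.univ.filter fun i => s i = true).card ≤ n := by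
        have := Finset.card_filter_le Finset.univ (fun i => s i = true)
        simpa using this
      show (Finset.univ.filter fun i => s i = true).card + ℓ = n + 0
      omega
    | succ t iht =>
      intro ht
      obtain ⟨hg, hc⟩ := iht (by omega)
      have hlt : (Finset.univ.filter fun i => seqS t i = true).card < n := by omega
      obtain ⟨a, haf⟩ := exists_false_coord (seqS t) hlt
      obtain ⟨w, hw⟩ := exists_adjustable hn B (seqS t) hsk hlin hg a haf
      have hne : {w : ℕ | ∃ h : w < n, Adjustable hn B (seqS t) ⟨w, h⟩}.Nonempty :=
        ⟨(w : ℕ), w.isLt, hw⟩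
      obtain ⟨hL, hadjL⟩ := Nat.sInf_mem hne
      have hL' : leastAdj hn B (seqS t) < n := hL
      have hadjL' : Adjustable hn B (seqS t) ⟨leastAdj hn B (seqS t), hL'⟩ := hadjL
      have hupd : seqS (t + 1) = Function.update (seqS t) ⟨leastAdj hn B (seqS t), hL'⟩ true := by
        rw [seqS_succ t]
        exact dif_pos hL'
      refine ⟨by rw [hupd]; exact hadjL'.2, ?_⟩
      rw [hupd, card_filter_update (seqS t) _ hadjL'.1]
      omega
  have stepdata : ∀ t, t < ℓ → ∃ hL : leastAdj hn B (seqS t) < n,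
      Adjustable hn B (seqS t) ⟨leastAdj hn B (seqS t), hL⟩ ∧
      seqS (t + 1) = Function.update (seqS t) ⟨leastAdj hn B (seqS t), hL⟩ true ∧
      (∀ b, b < leastAdj hn B (seqS t) → ∀ hb : b < n,
        ¬ Adjustable hn B (seqS t) ⟨b, hb⟩) := by
    intro t ht
    obtain ⟨hg, hc⟩ := stage t (by omega)
    have hlt : (Finset.univ.filter fun i => seqS t i = true).card < n := by omega
    obtain ⟨a, haf⟩ := exists_false_coord (seqS t) hlt
    obtain ⟨w, hw⟩ := exists_adjustable hn B (seqS t) hsk hlin hg a haf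
    have hne : {w : ℕ | ∃ h : w < n, Adjustable hn B (seqS t) ⟨w, h⟩}.Nonempty :=
      ⟨(w : ℕ), w.isLt, hw⟩
    obtain ⟨hL, hadjL⟩ := Nat.sInf_mem hne
    have hL' : leastAdj hn B (seqS t) < n := hL
    have hadjL' : Adjustable hn B (seqS t) ⟨leastAdj hn B (seqS t), hL'⟩ := hadjL
    refine ⟨hL', hadjL', ?_, ?_⟩
    · rw [seqS_succ t]
      exact dif_pos hL'
    · intro b hb hbn hadj
      exact Nat.notMem_of_lt_sInf hb ⟨hbn, hadj⟩
  have mono' : ∀ d t (x : Fin n), seqS t x = true → seqS (t + d) x = true := by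
    intro d
    induction d with
    | zero => intro t x hx; exact hx
    | succ d ihd =>
      intro t x hx
      have : t + (d + 1) = (t + d) + 1 := by omega
      rw [this, seqS_succ (t + d)]
      exact flipLeast_true hn B (seqS (t + d)) x (ihd t x hx)
  have mono : ∀ t u (x : Fin n), t ≤ u → seqS t x = true → seqS u x = true := by
    intro t u x htu hx
    have := mono' (u - t) t x hx
    rwa [show t + (u - t) = u by omega] at this
  have falsekeep : ∀ t u, t ≤ u → u < ℓ → ∀ hLu : leastAdj hn B (seqS u) < n,
      seqS t ⟨leastAdj hn B (seqS u), hLu⟩ = false := by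
    intro t u htu hu hLu
    obtain ⟨hL, hadj, _, _⟩ := stepdata u hu
    cases hx : seqS t ⟨leastAdj hn B (seqS u), hLu⟩
    · rfl
    · have := mono t u _ htu hx
      rw [hadj.1] at this
      exact absurd this (by simp)
  have wfval : ∀ u, u < ℓ → ∀ hLu : leastAdj hn B (seqS u) < n,
      wf (ℓ - u) = Fin.castLE hn ⟨leastAdj hn B (seqS u), hLu⟩ := by
    intro u hu hLu
    apply Fin.ext
    show leastAdj hn B (seqS (ℓ - (ℓ - u))) % n' = _
    rw [show ℓ - (ℓ - u) = u by omega, Nat.mod_eq_of_lt (by omega)]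
    rfl
  -- the main estimate
  have main : ∀ t, t ≤ ℓ → ∀ u, t ≤ u → u < ℓ →
      |Rseq q wf mv ℓ t (wf (ℓ - u)) - q (wf (ℓ - u))| ≤
        ((1 + ε) ^ t - 1) * q (wf (ℓ - u)) := by
    intro t
    induction t with
    | zero => intro _ u _ _; simp [Rseq]
    | succ t iht =>
      intro ht1 u htu hu
      obtain ⟨hLt, hadjt, hupdt, hleastt⟩ := stepdata t (by omega)
      obtain ⟨hLu, hadju, _, _⟩ := stepdata u hu
      have hwft : wf (ℓ - t) = Fin.castLE hn ⟨leastAdj hn B (seqS t), hLt⟩ :=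
        wfval t (by omega) hLt
      have hwfu : wf (ℓ - u) = Fin.castLE hn ⟨leastAdj hn B (seqS u), hLu⟩ :=
        wfval u hu hLu
      have hmv : mv (ℓ - t) (wf (ℓ - u)) =
          ((gQ hn B (seqS t) (Fin.castLE hn ⟨leastAdj hn B (seqS u), hLu⟩) : ℤ) : ℝ) := by
        show ((gQ hn B (seqS (ℓ - (ℓ - t))) (wf (ℓ - u)) : ℤ) : ℝ) = _
        rw [show ℓ - (ℓ - t) = t by omega, hwfu]
      have hfalse : seqS t ⟨leastAdj hn B (seqS u), hLu⟩ = false :=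
        falsekeep t u (by omega) hu hLu
      have hstep : Rseq q wf mv ℓ (t + 1) (wf (ℓ - u)) =
          Rseq q wf mv ℓ t (wf (ℓ - u)) +
            Rseq q wf mv ℓ t (wf (ℓ - t)) * mv (ℓ - t) (wf (ℓ - u)) := rfl
      have hIHu := iht (by omega) u (by omega) hu
      have hIHt := iht (by omega) t le_rfl (by omega)
      have hqu : 0 < q (wf (ℓ - u)) := hq _
      have hqt : 0 < q (wf (ℓ - t)) := hq _
      have hpow : (0:ℝ) < (1 + ε) ^ t := by positivity
      have hRt : |Rseq q wf mv ℓ t (wf (ℓ - t))| ≤ (1 + ε) ^ t * q (wf (ℓ - t)) := by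
        calc |Rseq q wf mv ℓ t (wf (ℓ - t))|
            = |(Rseq q wf mv ℓ t (wf (ℓ - t)) - q (wf (ℓ - t))) + q (wf (ℓ - t))| := by
              ring_nf
          _ ≤ |Rseq q wf mv ℓ t (wf (ℓ - t)) - q (wf (ℓ - t))| + |q (wf (ℓ - t))| :=
              abs_add_le _ _
          _ ≤ (1 + ε) ^ t * q (wf (ℓ - t)) := by
              rw [abs_of_pos hqt]
              nlinarith [hIHt]
      rcases lt_trichotomy (leastAdj hn B (seqS u)) (leastAdj hn B (seqS t)) with hcase | hcase | hcase
      · -- pu < pt : the multiplier vanishes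
        have hz : gQ hn B (seqS t) (Fin.castLE hn ⟨leastAdj hn B (seqS u), hLu⟩) = 0 :=
          gQ_below_least hn B (seqS t) hsk hA1 hlin (stage t (by omega)).1 _ hLu
            (fun b hb hbn => hleastt b (by omega) hbn) hfalse
        rw [hstep, hmv, hz]
        simp only [Int.cast_zero, mul_zero, add_zero]
        have hmono : ((1 + ε) ^ t - 1) * q (wf (ℓ - u)) ≤
            ((1 + ε) ^ (t + 1) - 1) * q (wf (ℓ - u)) := by
          rw [pow_succ]
          nlinarith [mul_pos (mul_pos hpow hqu) hε]
        linarith [hIHu]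
      · -- pu = pt : impossible
        exfalso
        have h1 : seqS (t + 1) ⟨leastAdj hn B (seqS t), hLt⟩ = true := by
          rw [hupdt]
          simp
        have h2 : seqS u ⟨leastAdj hn B (seqS t), hLt⟩ = true := mono (t + 1) u _ htu h1
        have h3 : (⟨leastAdj hn B (seqS t), hLt⟩ : Fin n) = ⟨leastAdj hn B (seqS u), hLu⟩ :=
          Fin.ext hcase.symm
        rw [h3, hadju.1] at h2
        exact absurd h2 (by simp)
      · -- pt < pu : use the chain bound
        have habs : |((gQ hn B (seqS t) (Fin.castLE hn ⟨leastAdj hn B (seqS u), hLu⟩) : ℤ) : ℝ)| ≤ 1 := by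
          have h := gQ_abs_le_one hn B (seqS t) hA1 hlin (stage t (by omega)).1 _ hfalse
          rw [abs_le]
          constructor
          · exact_mod_cast h.1
          · exact_mod_cast h.2
        have hqle : q (wf (ℓ - t)) ≤ ε * q (wf (ℓ - u)) := by
          rw [hwft, hwfu]
          exact hqlt _ _ hLu hcase
        rw [hstep, hmv]
        calc |Rseq q wf mv ℓ t (wf (ℓ - u)) +
              Rseq q wf mv ℓ t (wf (ℓ - t)) *
                ((gQ hn B (seqS t) (Fin.castLE hn ⟨leastAdj hn B (seqS u), hLu⟩) : ℤ) : ℝ) -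
              q (wf (ℓ - u))|
            = |(Rseq q wf mv ℓ t (wf (ℓ - u)) - q (wf (ℓ - u))) +
              Rseq q wf mv ℓ t (wf (ℓ - t)) *
                ((gQ hn B (seqS t) (Fin.castLE hn ⟨leastAdj hn B (seqS u), hLu⟩) : ℤ) : ℝ)| := by
              ring_nf
          _ ≤ |Rseq q wf mv ℓ t (wf (ℓ - u)) - q (wf (ℓ - u))| +
              |Rseq q wf mv ℓ t (wf (ℓ - t))| *
                |((gQ hn B (seqS t) (Fin.castLE hn ⟨leastAdj hn B (seqS u), hLu⟩) : ℤ) : ℝ)| := by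
              rw [← abs_mul]
              exact abs_add_le _ _
          _ ≤ ((1 + ε) ^ (t + 1) - 1) * q (wf (ℓ - u)) := by
              rw [pow_succ]
              have hb1 := mul_le_mul hRt habs (abs_nonneg _) (le_of_lt (mul_pos hpow hqt))
              have hb2 := mul_le_mul_of_nonneg_left hqle (le_of_lt hpow)
              nlinarith [hIHu, hb1, hb2]
    -- end main
  have lsub : ∀ i : ℕ, 1 ≤ i → i ≤ ℓ → ℓ - (ℓ - i) = i := by intro i h1 h2; omega
  have part1 : ∀ i i' : ℕ, 1 ≤ i → i < i' → i' ≤ ℓ + 1 →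
      |Qv i' (wf i) - q (wf i)| ≤ ((1 + ε) ^ (ℓ + 1 - i') - 1) * q (wf i) := by
    intro i i' h1 h2 h3
    have hm := main (ℓ + 1 - i') (by omega) (ℓ - i) (by omega) (by omega)
    rw [lsub i h1 (by omega)] at hm
    exact hm
  have part2 : ∀ i : ℕ, 1 ≤ i → i ≤ ℓ → 0 < Rseq q wf mv ℓ (ℓ - i) (wf i) := by
    intro i h1 h2
    have hm := main (ℓ - i) (by omega) (ℓ - i) le_rfl (by omega)
    rw [lsub i h1 h2] at hm
    rw [abs_le] at hm
    have hqi : 0 < q (wf i) := hq _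
    have hple : (1 + ε) ^ (ℓ - i) ≤ (1 + ε) ^ n :=
      pow_le_pow_right₀ (by linarith) (by omega)
    nlinarith [hm.1]
  have hQv' : ∀ i : ℕ, 1 ≤ i → i ≤ ℓ → ∀ r, Qv (i + 1) r = Rseq q wf mv ℓ (ℓ - i) r := by
    intro i h1 h2 r
    show Rseq q wf mv ℓ (ℓ + 1 - (i + 1)) r = _
    rw [show ℓ + 1 - (i + 1) = ℓ - i by omega]
  have hQv : ∀ i : ℕ, 1 ≤ i → i ≤ ℓ → ∀ r, Qv i r =
      Rseq q wf mv ℓ (ℓ - i) r + Rseq q wf mv ℓ (ℓ - i) (wf i) * mv i r := by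
    intro i h1 h2 r
    show Rseq q wf mv ℓ (ℓ + 1 - i) r = _
    rw [show ℓ + 1 - i = (ℓ - i) + 1 by omega]
    show Rseq q wf mv ℓ (ℓ - i) r + Rseq q wf mv ℓ (ℓ - i) (wf (ℓ - (ℓ - i))) *
      mv (ℓ - (ℓ - i)) r = _
    rw [lsub i h1 h2]
  refine ⟨part1, ?_, ?_, ?_⟩
  · intro i h1 h2
    rw [show Qv (i + 1) (wf i) = Rseq q wf mv ℓ (ℓ - i) (wf i) from hQv' i h1 h2 _]
    exact part2 i h1 h2
  · intro i h1 h2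
    refine ⟨Rseq q wf mv ℓ (ℓ - i) (wf i), part2 i h1 h2, fun r => ?_⟩
    rw [hQv i h1 h2 r, hQv' i h1 h2 r]
    ring
  · intro i h1 h2
    rw [hQv i h1 h2 (wf i)]
    obtain ⟨hL, hadj, _, _⟩ := stepdata (ℓ - i) (by omega)
    have hwfi : wf i = Fin.castLE hn ⟨leastAdj hn B (seqS (ℓ - i)), hL⟩ := by
      have := wfval (ℓ - i) (by omega) hL
      rwa [lsub i h1 h2] at this
    have hmv : mv i (wf i) = ((-1 : ℤ) : ℝ) := by
      show ((gQ hn B (seqS (ℓ - i)) (wf i) : ℤ) : ℝ) = _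
      rw [hwfi, gQ_of_adjustable hn B (seqS (ℓ - i)) hsk (stage (ℓ - i) (by omega)).1 _ hadj]
    rw [hmv]
    push_cast
    ring
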